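/- The relation of quasi-redirecting is transitive: if α, β, γ are quasi-geodesic rays based at o in a geodesic metric space such that α can be (q₁,Q₁)-redirected to β at every radius r > 0, and β can be (q₂,Q₂)-redirected to γ at every radius r > 0, then α can be (q₃,Q₃)-redirected to γ at every radius r > 0, where q₃ = max{q₂+1, q₁} and Q₃ = max{Q₁, Q₂}. -/

import Mathlib

open Metric Set Filter

/-- `α` is a (q,Q)-quasi-geodesic on the parameter set `s`. -/
def QGeo {X : Type*} [MetricSpace X] (q Q : ℝ) (s : Set ℝ) (α : ℝ → X) : Prop :=
  ∀ ⦃t u : ℝ⦄, t ∈ s → u ∈ s →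
    |t - u| / q - Q ≤ dist (α t) (α u) ∧ dist (α t) (α u) ≤ q * |t - u| + Q

/-- A geodesic metric space: any two points are joined by a unit-speed geodesic. -/
def GeodesicSpace (X : Type*) [MetricSpace X] : Prop :=
  ∀ x y : X, ∃ g : ℝ → X, g 0 = x ∧ g (dist x y) = y ∧
    ∀ s t : ℝ, s ∈ Set.Icc 0 (dist x y) → t ∈ Set.Icc 0 (dist x y) →
      dist (g s) (g t) = |s - t|

/-- A geodesic ray based at `o`: unit-speed isometric embedding of `[0,∞)` with value `o` at `0`. -/
def GeodesicRay {X : Type*} [MetricSpace X] (o : X) (a : ℝ → X) : Prop :=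
  a 0 = o ∧ ∀ s t : ℝ, 0 ≤ s → 0 ≤ t → dist (a s) (a t) = |s - t|

/-- The first time the ray `α` leaves the open ball of radius `r` about `o`. -/
noncomputable def exitTime {X : Type*} [MetricSpace X] (o : X) (α : ℝ → X) (r : ℝ) : ℝ :=
  sInf {t : ℝ | 0 ≤ t ∧ r ≤ dist o (α t)}

/-- `ζ` eventually coincides with `β` (up to a parameter shift). -/
def EventuallyCoincides {X : Type*} [MetricSpace X] (ζ β : ℝ → X) : Prop :=
  ∃ tβ tζ : ℝ, 0 ≤ tζ ∧ ∀ t ≥ tζ, ζ t = β (t + tβ)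

/-- `α` can be (q,Q)-redirected to `β` at radius `r`: some (q,Q)-quasi-geodesic ray based at `o`
agrees with `α` up to the first exit time of `α` from the ball of radius `r` about `o`,
and eventually coincides with `β`. -/
def Redirects {X : Type*} [MetricSpace X] (o : X) (q Q r : ℝ) (α β : ℝ → X) : Prop :=
  ∃ ζ : ℝ → X, QGeo q Q (Set.Ici 0) ζ ∧ ζ 0 = o ∧
    (∀ t ∈ Set.Icc 0 (exitTime o α r), ζ t = α t) ∧
    EventuallyCoincides ζ β

private lemma exitTime_lb' {X : Type*} [MetricSpace X] {o : X} {β : ℝ → X} {q Q : ℝ}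
    (hq : 1 ≤ q) (hQ : 0 ≤ Q) (hβQ : QGeo q Q (Set.Ici 0) β) (hβ0 : β 0 = o) (R : ℝ) :
    (R - Q) / q ≤ exitTime o β R := by
  have hq0 : 0 < q := lt_of_lt_of_le one_pos hq
  have hmem : ∀ t : ℝ, 0 ≤ t → dist o (β t) ≤ q * t + Q ∧ t / q - Q ≤ dist o (β t) := by
    intro t ht
    have h := hβQ (Set.mem_Ici.mpr ht) Set.self_mem_Ici
    rw [hβ0, sub_zero, abs_of_nonneg ht, dist_comm] at h
    exact ⟨h.2, h.1⟩
  have hne : {t : ℝ | 0 ≤ t ∧ R ≤ dist o (β t)}.Nonempty := by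
    refine ⟨q * (|R| + Q), by positivity, ?_⟩
    have h := (hmem (q * (|R| + Q)) (by positivity)).2
    have he : q * (|R| + Q) / q = |R| + Q := by field_simp
    rw [he] at h
    calc R ≤ |R| := le_abs_self R
      _ ≤ dist o (β (q * (|R| + Q))) := by linarith
  refine le_csInf hne ?_
  rintro t ⟨ht0, htR⟩
  have h := (hmem t ht0).1
  rw [div_le_iff₀ hq0]
  nlinarith

set_option maxHeartbeats 2000000
/-- transitivity of quasi-redirecting, with the explicit constants
q₃ = max (q₂+1) q₁ and Q₃ = max Q₁ Q₂. -/
theorem stmt5 {X : Type*} [MetricSpace X] (hX : GeodesicSpace X) (o : X)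
    (α β γ : ℝ → X)
    (hα : ∃ q Q : ℝ, 1 ≤ q ∧ 0 ≤ Q ∧ QGeo q Q (Set.Ici 0) α) (hα0 : α 0 = o)
    (hβ : ∃ q Q : ℝ, 1 ≤ q ∧ 0 ≤ Q ∧ QGeo q Q (Set.Ici 0) β) (hβ0 : β 0 = o)
    (hγ : ∃ q Q : ℝ, 1 ≤ q ∧ 0 ≤ Q ∧ QGeo q Q (Set.Ici 0) γ) (hγ0 : γ 0 = o)
    (q₁ Q₁ q₂ Q₂ : ℝ) (hq₁ : 1 ≤ q₁) (hQ₁ : 0 ≤ Q₁) (hq₂ : 1 ≤ q₂) (hQ₂ : 0 ≤ Q₂)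
    (h1 : ∀ r > (0:ℝ), Redirects o q₁ Q₁ r α β)
    (h2 : ∀ r > (0:ℝ), Redirects o q₂ Q₂ r β γ) :
    ∀ r > (0:ℝ), Redirects o (max (q₂ + 1) q₁) (max Q₁ Q₂) r α γ := by
  classical
  intro r hr
  obtain ⟨qb, Qb, hqb, hQb, hβQ⟩ := hβ
  obtain ⟨ζ₁, hζ₁Q, hζ₁0, hζ₁α, tβ, tζ, htζ0, hζ₁β⟩ := h1 r hr
  have hq₁0 : 0 < q₁ := lt_of_lt_of_le one_pos hq₁
  have hq₂0 : 0 < q₂ := lt_of_lt_of_le one_pos hq₂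
  set q₃ := max (q₂ + 1) q₁ with hq₃def
  set Q₃ := max Q₁ Q₂ with hQ₃def
  have hq₃q₁ : q₁ ≤ q₃ := le_max_right _ _
  have hq₃q₂ : q₂ + 1 ≤ q₃ := le_max_left _ _
  have hq₃1 : (1:ℝ) ≤ q₃ := le_trans hq₁ hq₃q₁
  have hq₃0 : 0 < q₃ := lt_of_lt_of_le one_pos hq₃1
  have hQ₃1 : Q₁ ≤ Q₃ := le_max_left _ _
  have hQ₃2 : Q₂ ≤ Q₃ := le_max_right _ _
  have hQ₃0 : 0 ≤ Q₃ := le_trans hQ₁ hQ₃1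
  set a := max tζ (-tβ) with hadef
  have ha0 : 0 ≤ a := le_trans htζ0 (le_max_left _ _)
  have htζa : tζ ≤ a := le_max_left _ _
  have haβ : 0 ≤ a + tβ := by
    have := le_max_right tζ (-tβ); rw [← hadef] at this; linarith
  set K := q₂ * q₃ * (Q₁ + Q₂ + (q₁ + 1) * a) + Q₁ + Q₂ + 1 with hKdef
  have hC0 : 0 ≤ Q₁ + Q₂ + (q₁ + 1) * a := by
    have : 0 ≤ (q₁ + 1) * a := mul_nonneg (by linarith) ha0
    linarith
  have hK1 : Q₁ + Q₂ + 1 ≤ K := by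
    have : 0 ≤ q₂ * q₃ * (Q₁ + Q₂ + (q₁ + 1) * a) :=
      mul_nonneg (mul_nonneg hq₂0.le hq₃0.le) hC0
    rw [hKdef]; linarith
  have hK0 : 0 < K := by linarith
  set T := exitTime o α r with hTdef
  set M := tβ + max T (a + K) with hMdef
  set R := qb * max M 1 + Qb + qb with hRdef
  have hmax1 : (1:ℝ) ≤ max M 1 := le_max_right _ _
  have hR0 : 0 < R := by nlinarith
  obtain ⟨ζ₂, hζ₂Q, hζ₂0, hζ₂β, tγ, tζ₂, htζ₂0, hζ₂γ⟩ := h2 R hR0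
  set S := exitTime o β R with hSdef
  have hSlb : max M 1 + 1 ≤ S := by
    have h := exitTime_lb' hqb hQb hβQ hβ0 R
    have hqb0 : (0:ℝ) < qb := lt_of_lt_of_le one_pos hqb
    have he : (R - Qb) / qb = max M 1 + 1 := by
      rw [hRdef]; field_simp; ring
    rw [he] at h; exact h
  have hMS : M + 1 ≤ S := le_trans (by have := le_max_left M 1; linarith) hSlb
  have hTS : T + tβ ≤ S := by
    have := le_max_left T (a + K); rw [hMdef] at hMS; linarith
  have haKS : a + K + tβ ≤ S := by
    have := le_max_right T (a + K); rw [hMdef] at hMS; linarith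
  set ζ : ℝ → X := fun t => if t ≤ a then ζ₁ t else ζ₂ (t + tβ) with hζdef
  have hζle : ∀ t, t ≤ a → ζ t = ζ₁ t := by
    intro t ht; simp only [hζdef]; exact if_pos ht
  have hζgt : ∀ t, ¬ t ≤ a → ζ t = ζ₂ (t + tβ) := by
    intro t ht; simp only [hζdef]; exact if_neg ht
  have hkey : ∀ t, a ≤ t → t + tβ ≤ S → ζ₁ t = ζ₂ (t + tβ) := by
    intro t h1t h2t
    rw [hζ₁β t (le_trans htζa h1t)]
    exact (hζ₂β (t + tβ) ⟨by linarith, h2t⟩).symm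
  refine ⟨ζ, ?_, ?_, ?_, ?_⟩
  · -- QGeo
    have weaken : ∀ q Q : ℝ, 0 < q → q ≤ q₃ → Q ≤ Q₃ → ∀ d D : ℝ, 0 ≤ d →
        d / q - Q ≤ D → D ≤ q * d + Q → d / q₃ - Q₃ ≤ D ∧ D ≤ q₃ * d + Q₃ := by
      intro q Q hq hqle hQle d D hd h1 h2
      constructor
      · have hdd : d / q₃ ≤ d / q := by gcongr
        linarith
      · have hdd : q * d ≤ q₃ * d := mul_le_mul_of_nonneg_right hqle hd
        linarith
    have main : ∀ t u : ℝ, 0 ≤ t → 0 ≤ u → t ≤ u →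
        (u - t) / q₃ - Q₃ ≤ dist (ζ t) (ζ u) ∧ dist (ζ t) (ζ u) ≤ q₃ * (u - t) + Q₃ := by
      intro t u ht hu htu
      by_cases hua : u ≤ a
      · rw [hζle t (le_trans htu hua), hζle u hua]
        have h := hζ₁Q (Set.mem_Ici.mpr ht) (Set.mem_Ici.mpr hu)
        rw [abs_sub_comm, abs_of_nonneg (by linarith)] at h
        exact weaken q₁ Q₁ hq₁0 hq₃q₁ hQ₃1 _ _ (by linarith) h.1 h.2
      · by_cases hta : t ≤ a
        · -- t ≤ a < u
          by_cases hus : u + tβ ≤ S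
          · rw [hζle t hta, hζgt u hua, ← hkey u (le_of_lt (lt_of_not_ge hua)) hus]
            have h := hζ₁Q (Set.mem_Ici.mpr ht) (Set.mem_Ici.mpr hu)
            rw [abs_sub_comm, abs_of_nonneg (by linarith)] at h
            exact weaken q₁ Q₁ hq₁0 hq₃q₁ hQ₃1 _ _ (by linarith) h.1 h.2
          · -- far case: u - a ≥ K
            push_neg at hus
            have hau : a + K < u := by linarith
            rw [hζle t hta, hζgt u hua]
            have hpt : dist (ζ₁ t) (ζ₁ a) ≤ q₁ * (a - t) + Q₁ := by
              have h := hζ₁Q (Set.mem_Ici.mpr ht) (Set.mem_Ici.mpr ha0)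
              rw [abs_sub_comm, abs_of_nonneg (by linarith)] at h
              exact h.2
            have hpe : ζ₁ a = ζ₂ (a + tβ) := hkey a le_rfl (by linarith)
            have h2b := hζ₂Q (Set.mem_Ici.mpr haβ)
              (Set.mem_Ici.mpr (show (0:ℝ) ≤ u + tβ by linarith))
            rw [show a + tβ - (u + tβ) = -(u - a) by ring, abs_neg,
              abs_of_nonneg (by linarith : (0:ℝ) ≤ u - a)] at h2b
            obtain ⟨h2l, h2u⟩ := h2b
            constructor
            · -- lower bound
              have htri : dist (ζ₂ (a + tβ)) (ζ₂ (u + tβ)) ≤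
                  dist (ζ₂ (a + tβ)) (ζ₁ t) + dist (ζ₁ t) (ζ₂ (u + tβ)) := dist_triangle _ _ _
              have hsw : dist (ζ₂ (a + tβ)) (ζ₁ t) = dist (ζ₁ t) (ζ₁ a) := by
                rw [← hpe, dist_comm]
              have hD : (u - a) / q₂ - Q₂ - (q₁ * (a - t) + Q₁) ≤ dist (ζ₁ t) (ζ₂ (u + tβ)) := by
                rw [hsw] at htri; linarith
              have hsplit : (u - t) / q₃ = (u - a) / q₃ + (a - t) / q₃ := by
                field_simp; ring
              have h1' : (a - t) / q₃ ≤ a :=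
                le_trans (div_le_self (by linarith) hq₃1) (by linarith)
              have hq₁at : q₁ * (a - t) ≤ q₁ * a :=
                mul_le_mul_of_nonneg_left (by linarith) hq₁0.le
              have hgapeq : (u - a) / q₂ - (u - a) / q₃ = (u - a) * (q₃ - q₂) / (q₂ * q₃) := by
                field_simp
              have hge1 : (u - a) * 1 ≤ (u - a) * (q₃ - q₂) :=
                mul_le_mul_of_nonneg_left (by linarith) (by linarith)
              have hnum : q₂ * q₃ * (Q₁ + Q₂ + (q₁ + 1) * a) ≤ (u - a) * (q₃ - q₂) := by
                rw [hKdef] at hau; linarith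
              have hgapge : Q₁ + Q₂ + (q₁ + 1) * a ≤ (u - a) * (q₃ - q₂) / (q₂ * q₃) := by
                rw [le_div_iff₀ (by positivity : (0:ℝ) < q₂ * q₃)]
                linarith [hnum]
              linarith [hD, hsplit, h1', hq₁at, hgapeq, hgapge, hQ₃0]
            · -- upper bound
              have htri : dist (ζ₁ t) (ζ₂ (u + tβ)) ≤
                  dist (ζ₁ t) (ζ₁ a) + dist (ζ₂ (a + tβ)) (ζ₂ (u + tβ)) := by
                calc dist (ζ₁ t) (ζ₂ (u + tβ)) ≤
                    dist (ζ₁ t) (ζ₁ a) + dist (ζ₁ a) (ζ₂ (u + tβ)) := dist_triangle _ _ _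
                  _ = dist (ζ₁ t) (ζ₁ a) + dist (ζ₂ (a + tβ)) (ζ₂ (u + tβ)) := by rw [hpe]
              have e1 : q₁ * (a - t) ≤ q₃ * (a - t) :=
                mul_le_mul_of_nonneg_right hq₃q₁ (by linarith)
              have e2 : (q₂ + 1) * (u - a) ≤ q₃ * (u - a) :=
                mul_le_mul_of_nonneg_right hq₃q₂ (by linarith)
              linarith [htri, hpt, h2u, e1, e2, hK1, hau, hQ₃0]
        · -- both > a : use ζ₂
          rw [hζgt t hta, hζgt u hua]
          push_neg at hta
          have h := hζ₂Q (Set.mem_Ici.mpr (show (0:ℝ) ≤ t + tβ by linarith))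
            (Set.mem_Ici.mpr (show (0:ℝ) ≤ u + tβ by linarith))
          rw [show t + tβ - (u + tβ) = -(u - t) by ring, abs_neg,
            abs_of_nonneg (by linarith : (0:ℝ) ≤ u - t)] at h
          exact weaken q₂ Q₂ hq₂0 (by linarith) hQ₃2 _ _ (by linarith) h.1 h.2
    intro t u ht hu
    rcases le_total t u with h | h
    · have hm := main t u ht hu h
      rwa [abs_sub_comm, abs_of_nonneg (by linarith : (0:ℝ) ≤ u - t)]
    · have hm := main u t hu ht h
      rw [show dist (ζ t) (ζ u) = dist (ζ u) (ζ t) from dist_comm _ _,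
        abs_of_nonneg (by linarith : (0:ℝ) ≤ t - u)]
      exact hm
  · rw [hζle 0 ha0]; exact hζ₁0
  · -- agreement with α
    rintro t ⟨ht0, htT⟩
    by_cases hta : t ≤ a
    · rw [hζle t hta]; exact hζ₁α t ⟨ht0, htT⟩
    · rw [hζgt t hta]
      push_neg at hta
      have h0 : (0:ℝ) ≤ t + tβ := by linarith
      have hS : t + tβ ≤ S := by
        have htT' : t ≤ T := htT
        linarith
      rw [hζ₂β (t + tβ) ⟨h0, hS⟩, ← hζ₁β t (by linarith)]
      exact hζ₁α t ⟨ht0, htT⟩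
  · -- eventually coincides with γ
    refine ⟨tβ + tγ, max (a + 1) (tζ₂ - tβ), le_trans (by linarith) (le_max_left _ _), ?_⟩
    intro t htt
    have h1' := le_trans (le_max_left (a + 1) (tζ₂ - tβ)) htt
    have h2' := le_trans (le_max_right (a + 1) (tζ₂ - tβ)) htt
    rw [hζgt t (by push_neg; linarith), hζ₂γ (t + tβ) (by linarith)]
    congr 1; ring
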